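/- Let (X, B, μ) be a finite measure space and (E_n) a sequence of measurable sets with ∑ μ(E_n) = ∞. Then μ(limsup E_n) ≥ limsup_{Q→∞} (∑_{n=1}^Q μ(E_n))² / (∑_{n,m=1}^Q μ(E_n ∩ E_m)). -/

import Mathlib

open MeasureTheory Filter
open scoped Topology

open scoped ENNReal NNReal

private lemma nnreal_sq_aux (a b : ℝ≥0) (hba : b ≤ a) :
    a ^ 2 ≤ (a - b) ^ 2 + 2 * b * a := by
  rw [← NNReal.coe_le_coe]
  push_cast [NNReal.coe_sub hba]
  nlinarith [b.coe_nonneg, (NNReal.coe_le_coe.mpr hba : (b : ℝ) ≤ a)]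

private lemma ennreal_sq_aux (a b : ℝ≥0∞) (hat : a ≠ ⊤) (hba : b ≤ a) :
    a ^ 2 ≤ (a - b) ^ 2 + 2 * b * a := by
  have hbt : b ≠ ⊤ := ne_top_of_le_ne_top hat hba
  lift a to ℝ≥0 using hat
  lift b to ℝ≥0 using hbt
  rw [← ENNReal.coe_sub]
  exact_mod_cast nnreal_sq_aux a b (by exact_mod_cast hba)

private lemma cs_lemma {X : Type*} [MeasurableSpace X] (μ : Measure X)
    (E : ℕ → Set X) (hE : ∀ n, MeasurableSet (E n)) (s : Finset ℕ)
    (U : Set X) (hU : MeasurableSet U) (hsub : ∀ n ∈ s, E n ⊆ U) :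
    (∑ n ∈ s, μ (E n)) ^ 2 ≤ (∑ n ∈ s, ∑ m ∈ s, μ (E n ∩ E m)) * μ U := by
  set F : X → ℝ≥0∞ := fun x => ∑ n ∈ s, (E n).indicator 1 x with hF
  have hFmeas : Measurable F :=
    Finset.measurable_sum s fun n _ => measurable_one.indicator (hE n)
  have hGmeas : Measurable (U.indicator (1 : X → ℝ≥0∞)) := measurable_one.indicator hU
  have h1 : ∫⁻ x, F x ∂μ = ∑ n ∈ s, μ (E n) := by
    rw [hF, lintegral_finset_sum s fun n _ => measurable_one.indicator (hE n)]
    exact Finset.sum_congr rfl fun n _ => lintegral_indicator_one (hE n)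
  have h2 : ∫⁻ x, F x ^ 2 ∂μ = ∑ n ∈ s, ∑ m ∈ s, μ (E n ∩ E m) := by
    have hpt : ∀ x, F x ^ 2 = ∑ n ∈ s, ∑ m ∈ s, (E n ∩ E m).indicator (1 : X → ℝ≥0∞) x := by
      intro x
      rw [sq, hF, Finset.sum_mul_sum]
      exact Finset.sum_congr rfl fun n _ => Finset.sum_congr rfl fun m _ => by
        rw [Set.inter_indicator_one]; rfl
    simp_rw [hpt]
    rw [lintegral_finset_sum s fun n _ =>
      Finset.measurable_sum s fun m _ => measurable_one.indicator ((hE n).inter (hE m))]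
    refine Finset.sum_congr rfl fun n _ => ?_
    rw [lintegral_finset_sum s fun m _ => measurable_one.indicator ((hE n).inter (hE m))]
    exact Finset.sum_congr rfl fun m _ => lintegral_indicator_one ((hE n).inter (hE m))
  have hFU : ∀ x, F x * U.indicator (1 : X → ℝ≥0∞) x = F x := by
    intro x
    by_cases hx : x ∈ U
    · simp [Set.indicator_of_mem hx]
    · have hFx : F x = 0 :=
        Finset.sum_eq_zero fun n hn =>
          Set.indicator_of_notMem (fun h => hx (hsub n hn h)) _
      simp [hFx]
  have hconj : Real.HolderConjugate 2 2 := Real.HolderConjugate.two_two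
  have key := ENNReal.lintegral_mul_le_Lp_mul_Lq μ hconj hFmeas.aemeasurable hGmeas.aemeasurable
  simp_rw [Pi.mul_apply, hFU] at key
  have hind2 : ∀ x, U.indicator (1 : X → ℝ≥0∞) x ^ (2 : ℝ) = U.indicator 1 x := by
    intro x
    by_cases hx : x ∈ U <;> simp [Set.indicator_of_mem, Set.indicator_of_notMem, hx,
      ENNReal.rpow_two]
  simp_rw [hind2, ENNReal.rpow_two, lintegral_indicator_one hU] at key
  calc (∑ n ∈ s, μ (E n)) ^ 2 = (∫⁻ x, F x ∂μ) ^ 2 := by rw [h1]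
    _ ≤ ((∫⁻ x, F x ^ 2 ∂μ) ^ (1 / (2:ℝ)) * μ U ^ (1 / (2:ℝ))) ^ 2 :=
        pow_le_pow_left₀ zero_le key 2
    _ = (∫⁻ x, F x ^ 2 ∂μ) * μ U := by
        rw [mul_pow, ← ENNReal.rpow_two ((∫⁻ x, F x ^ 2 ∂μ) ^ (1 / (2:ℝ))),
          ← ENNReal.rpow_two (μ U ^ (1 / (2:ℝ))), ← ENNReal.rpow_mul, ← ENNReal.rpow_mul]
        norm_num
    _ = (∑ n ∈ s, ∑ m ∈ s, μ (E n ∩ E m)) * μ U := by rw [h2]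

theorem stmt_0 {X : Type*} [MeasurableSpace X] (μ : Measure X) [IsFiniteMeasure μ]
    (E : ℕ → Set X) (hE : ∀ n, MeasurableSet (E n))
    (hdiv : ∑' n, μ (E n) = ⊤) :
    limsup (fun Q : ℕ =>
      (∑ n ∈ Finset.range Q, μ (E n)) ^ 2 /
        ∑ n ∈ Finset.range Q, ∑ m ∈ Finset.range Q, μ (E n ∩ E m)) atTop
      ≤ μ (limsup E atTop) := by
  set S : ℕ → ℝ≥0∞ := fun Q => ∑ n ∈ Finset.range Q, μ (E n) with hS
  set T : ℕ → ℝ≥0∞ := fun Q => ∑ n ∈ Finset.range Q, ∑ m ∈ Finset.range Q, μ (E n ∩ E m)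
    with hT
  set U : ℕ → Set X := fun k => ⋃ i, ⋃ (_ : i ≥ k), E i with hU
  have hUmeas : ∀ k, MeasurableSet (U k) := fun k =>
    MeasurableSet.iUnion fun i => MeasurableSet.iUnion fun _ => hE i
  have hUsub : ∀ k n, k ≤ n → E n ⊆ U k := fun k n hn =>
    Set.subset_iUnion₂ (s := fun i (_ : i ≥ k) => E i) n hn
  have hUanti : Antitone U := fun i j hij =>
    Set.iUnion₂_subset fun n hn => hUsub i n (hij.trans hn)
  have hM : μ Set.univ ≠ ⊤ := (measure_lt_top μ _).ne
  have hS_top : ∀ k, S k ≠ ⊤ := fun k =>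
    (ENNReal.sum_lt_top.mpr fun n _ => measure_lt_top μ _).ne
  have hT_top : ∀ Q, T Q ≠ ⊤ := fun Q =>
    (ENNReal.sum_lt_top.mpr fun n _ => ENNReal.sum_lt_top.mpr fun m _ => measure_lt_top μ _).ne
  have hST : ∀ Q, S Q ≤ T Q := fun Q => Finset.sum_le_sum fun n hn => by
    have h := Finset.single_le_sum (f := fun m => μ (E n ∩ E m)) (fun m _ => zero_le) hn
    simpa [Set.inter_self] using h
  have hCS : ∀ k Q, k ≤ Q → (S Q - S k) ^ 2 ≤ T Q * μ (U k) := by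
    intro k Q hkQ
    have hsum : S k + ∑ n ∈ Finset.Ico k Q, μ (E n) = S Q :=
      Finset.sum_range_add_sum_Ico _ hkQ
    have hdiff : S Q - S k = ∑ n ∈ Finset.Ico k Q, μ (E n) := by
      rw [← hsum, ENNReal.add_sub_cancel_left (hS_top k)]
    have hsubset : Finset.Ico k Q ⊆ Finset.range Q := by
      rw [Finset.range_eq_Ico]
      exact Finset.Ico_subset_Ico (Nat.zero_le k) le_rfl
    rw [hdiff]
    calc (∑ n ∈ Finset.Ico k Q, μ (E n)) ^ 2
        ≤ (∑ n ∈ Finset.Ico k Q, ∑ m ∈ Finset.Ico k Q, μ (E n ∩ E m)) * μ (U k) :=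
          cs_lemma μ E hE _ _ (hUmeas k)
            (fun n hn => hUsub k n (Finset.mem_Ico.mp hn).1)
      _ ≤ T Q * μ (U k) := by
          refine mul_le_mul_left ?_ _
          calc ∑ n ∈ Finset.Ico k Q, ∑ m ∈ Finset.Ico k Q, μ (E n ∩ E m)
              ≤ ∑ n ∈ Finset.Ico k Q, ∑ m ∈ Finset.range Q, μ (E n ∩ E m) :=
                Finset.sum_le_sum fun n _ => Finset.sum_le_sum_of_subset hsubset
            _ ≤ T Q := Finset.sum_le_sum_of_subset hsubset
  have hCSuniv : ∀ Q, S Q ^ 2 ≤ T Q * μ Set.univ := fun Q =>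
    cs_lemma μ E hE (Finset.range Q) _ MeasurableSet.univ fun n _ => Set.subset_univ _
  have hStend : Tendsto S atTop (𝓝 ⊤) := by
    have := ENNReal.tendsto_nat_tsum fun n => μ (E n)
    rwa [hdiv] at this
  by_contra hcon
  push_neg at hcon
  obtain ⟨c, hc1, hc2⟩ := exists_between hcon
  have hkey : ∀ k, c ≤ μ (U k) := by
    intro k
    refine ENNReal.le_of_forall_pos_le_add fun ε hε hUfin => ?_
    have hε0 : (ε : ℝ≥0∞) ≠ 0 := by exact_mod_cast hε.ne'
    have hεt : (ε : ℝ≥0∞) ≠ ⊤ := ENNReal.coe_ne_top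
    have hnum : 2 * S k * μ Set.univ ≠ ⊤ :=
      ENNReal.mul_ne_top (ENNReal.mul_ne_top (by norm_num) (hS_top k)) hM
    have hKlt : 2 * S k * μ Set.univ / (ε : ℝ≥0∞) < ⊤ := ENNReal.div_lt_top hnum hε0
    have hev1 : ∀ᶠ Q in atTop, 2 * S k * μ Set.univ / (ε : ℝ≥0∞) < S Q :=
      hStend.eventually (eventually_gt_nhds hKlt)
    have hev2 : ∀ᶠ Q in atTop, 1 < S Q :=
      hStend.eventually (eventually_gt_nhds ENNReal.one_lt_top)
    have hev3 : ∀ᶠ Q in atTop, k ≤ Q := eventually_ge_atTop k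
    have hfreq : ∃ᶠ Q in atTop, c < S Q ^ 2 / T Q := by
      have hne : ¬ ∀ᶠ Q in atTop, S Q ^ 2 / T Q ≤ c :=
        fun h => hc2.not_ge (limsup_le_of_le (by isBoundedDefault) h)
      rw [not_eventually] at hne
      simpa [not_le] using hne
    obtain ⟨Q, hcQ, hK, h1, hkQ⟩ :=
      (hfreq.and_eventually (hev1.and (hev2.and hev3))).exists
    have hSQ0 : S Q ≠ 0 := (zero_lt_one.trans h1).ne'
    have hSQt : S Q ≠ ⊤ := hS_top Q
    have hTQ0 : T Q ≠ 0 := (zero_lt_one.trans (h1.trans_le (hST Q))).ne'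
    have hTQt : T Q ≠ ⊤ := hT_top Q
    have hcT : c * T Q < S Q ^ 2 :=
      (ENNReal.lt_div_iff_mul_lt (Or.inl hTQ0) (Or.inl hTQt)).mp hcQ
    have h2b : 2 * S k * μ Set.univ ≤ S Q * (ε : ℝ≥0∞) :=
      ((ENNReal.div_lt_iff (Or.inl hε0) (Or.inl hεt)).mp hK).le
    have h2ab : 2 * S k * S Q ≤ (ε : ℝ≥0∞) * T Q := by
      have hmul : 2 * S k * S Q * S Q ≤ (ε : ℝ≥0∞) * T Q * S Q := by
        calc 2 * S k * S Q * S Q = 2 * S k * S Q ^ 2 := by ring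
          _ ≤ 2 * S k * (T Q * μ Set.univ) := mul_le_mul_right (hCSuniv Q) _
          _ = 2 * S k * μ Set.univ * T Q := by ring
          _ ≤ S Q * (ε : ℝ≥0∞) * T Q := mul_le_mul_left h2b _
          _ = (ε : ℝ≥0∞) * T Q * S Q := by ring
      exact (ENNReal.mul_le_mul_iff_left hSQ0 hSQt).mp hmul
    have hbk : S k ≤ S Q :=
      Finset.sum_le_sum_of_subset (Finset.range_subset_range.mpr hkQ)
    have hchain : c * T Q < (μ (U k) + (ε : ℝ≥0∞)) * T Q := by
      calc c * T Q < S Q ^ 2 := hcT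
        _ ≤ (S Q - S k) ^ 2 + 2 * S k * S Q := ennreal_sq_aux _ _ hSQt hbk
        _ ≤ T Q * μ (U k) + (ε : ℝ≥0∞) * T Q := add_le_add (hCS k Q hkQ) h2ab
        _ = (μ (U k) + (ε : ℝ≥0∞)) * T Q := by ring
    exact ((ENNReal.mul_lt_mul_iff_left hTQ0 hTQt).mp hchain).le
  have hlimsupset : limsup E atTop = ⋂ k, U k := by
    rw [limsup_eq_iInf_iSup_of_nat]; rfl
  have hmeq : μ (limsup E atTop) = ⨅ k, μ (U k) := by
    rw [hlimsupset]
    exact hUanti.measure_iInter (fun k => (hUmeas k).nullMeasurableSet)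
      ⟨0, (measure_lt_top μ _).ne⟩
  exact hc1.not_ge (hmeq ▸ le_iInf hkey)
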